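/- Let K be the subgroup of F = F(a,b) × F(c,d) generated by the six elements ba⁻¹, ca⁻¹, da⁻¹, cb⁻¹, db⁻¹, dc⁻¹. Then K is a normal subgroup of F. -/

import Mathlib

/-- `F₂`, the free group on two generators. -/
abbrev F2 : Type := FreeGroup (Fin 2)

/-- `a`, a free generator of the first factor of `F₂ × F₂`. -/
def a : F2 × F2 := (FreeGroup.of 0, 1)
/-- `b`, a free generator of the first factor of `F₂ × F₂`. -/
def b : F2 × F2 := (FreeGroup.of 1, 1)
/-- `c`, a free generator of the second factor of `F₂ × F₂`. -/
def c : F2 × F2 := (1, FreeGroup.of 0)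
/-- `d`, a free generator of the second factor of `F₂ × F₂`. -/
def d : F2 × F2 := (1, FreeGroup.of 1)

private def S : Set (F2 × F2) := {b * a⁻¹, c * a⁻¹, d * a⁻¹, c * b⁻¹, d * b⁻¹, d * c⁻¹}

private def N : Subgroup (F2 × F2) := Subgroup.closure S

private lemma prod_ext {x y : F2 × F2} (h1 : x.1 = y.1) (h2 : x.2 = y.2) : x = y :=
  Prod.ext h1 h2

-- conjugation identities
private lemma id1 : c * (b * a⁻¹) * c⁻¹ = b * a⁻¹ := by
  apply prod_ext <;> simp [a, b, c, d, mul_assoc]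
private lemma id2 : c * (c * a⁻¹) * c⁻¹ = c * a⁻¹ := by
  apply prod_ext <;> simp [a, b, c, d, mul_assoc]
private lemma id3 : c * (d * a⁻¹) * c⁻¹ = (c * a⁻¹) * (d * a⁻¹) * (c * a⁻¹)⁻¹ := by
  apply prod_ext <;> simp [a, b, c, d, mul_assoc]
private lemma id4 : c * (c * b⁻¹) * c⁻¹ = c * b⁻¹ := by
  apply prod_ext <;> simp [a, b, c, d, mul_assoc]
private lemma id5 : c * (d * b⁻¹) * c⁻¹ = (c * b⁻¹) * (d * b⁻¹) * (c * b⁻¹)⁻¹ := by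
  apply prod_ext <;> simp [a, b, c, d, mul_assoc]
private lemma id6 : c * (d * c⁻¹) * c⁻¹ = (c * a⁻¹) * (d * c⁻¹) * (c * a⁻¹)⁻¹ := by
  apply prod_ext <;> simp [a, b, c, d, mul_assoc]

private lemma id1' : c⁻¹ * (b * a⁻¹) * c = b * a⁻¹ := by
  apply prod_ext <;> simp [a, b, c, d, mul_assoc]
private lemma id2' : c⁻¹ * (c * a⁻¹) * c = c * a⁻¹ := by
  apply prod_ext <;> simp [a, b, c, d, mul_assoc]
private lemma id3' : c⁻¹ * (d * a⁻¹) * c = (c * a⁻¹)⁻¹ * (d * a⁻¹) * (c * a⁻¹) := by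
  apply prod_ext <;> simp [a, b, c, d, mul_assoc]
private lemma id4' : c⁻¹ * (c * b⁻¹) * c = c * b⁻¹ := by
  apply prod_ext <;> simp [a, b, c, d, mul_assoc]
private lemma id5' : c⁻¹ * (d * b⁻¹) * c = (c * b⁻¹)⁻¹ * (d * b⁻¹) * (c * b⁻¹) := by
  apply prod_ext <;> simp [a, b, c, d, mul_assoc]
private lemma id6' : c⁻¹ * (d * c⁻¹) * c = (c * a⁻¹)⁻¹ * (d * c⁻¹) * (c * a⁻¹) := by
  apply prod_ext <;> simp [a, b, c, d, mul_assoc]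

private lemma memS (x : F2 × F2) (h : x ∈ S) : x ∈ N := Subgroup.subset_closure h

private lemma u_mem : b * a⁻¹ ∈ N := memS _ (by simp [S])
private lemma v_mem : c * a⁻¹ ∈ N := memS _ (by simp [S])
private lemma w_mem : d * a⁻¹ ∈ N := memS _ (by simp [S])
private lemma p_mem : c * b⁻¹ ∈ N := memS _ (by simp [S])
private lemma q_mem : d * b⁻¹ ∈ N := memS _ (by simp [S])
private lemma r_mem : d * c⁻¹ ∈ N := memS _ (by simp [S])

private lemma conj_c : ∀ n ∈ N, c * n * c⁻¹ ∈ N := by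
  intro n hn
  induction hn using Subgroup.closure_induction with
  | mem x hx =>
    rcases hx with h | h | h | h | h | h <;> subst h
    · rw [id1]; exact u_mem
    · rw [id2]; exact v_mem
    · rw [id3]; exact N.mul_mem (N.mul_mem v_mem w_mem) (N.inv_mem v_mem)
    · rw [id4]; exact p_mem
    · rw [id5]; exact N.mul_mem (N.mul_mem p_mem q_mem) (N.inv_mem p_mem)
    · rw [id6]; exact N.mul_mem (N.mul_mem v_mem r_mem) (N.inv_mem v_mem)
  | one => simpa using N.one_mem
  | mul x y hx hy ihx ihy =>
    have : c * (x * y) * c⁻¹ = (c * x * c⁻¹) * (c * y * c⁻¹) := by group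
    rw [this]; exact N.mul_mem ihx ihy
  | inv x hx ihx =>
    have : c * x⁻¹ * c⁻¹ = (c * x * c⁻¹)⁻¹ := by group
    rw [this]; exact N.inv_mem ihx

private lemma conj_cinv : ∀ n ∈ N, c⁻¹ * n * c ∈ N := by
  intro n hn
  induction hn using Subgroup.closure_induction with
  | mem x hx =>
    rcases hx with h | h | h | h | h | h <;> subst h
    · rw [id1']; exact u_mem
    · rw [id2']; exact v_mem
    · rw [id3']; exact N.mul_mem (N.mul_mem (N.inv_mem v_mem) w_mem) v_mem
    · rw [id4']; exact p_mem
    · rw [id5']; exact N.mul_mem (N.mul_mem (N.inv_mem p_mem) q_mem) p_mem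
    · rw [id6']; exact N.mul_mem (N.mul_mem (N.inv_mem v_mem) r_mem) v_mem
  | one => simpa using N.one_mem
  | mul x y hx hy ihx ihy =>
    have : c⁻¹ * (x * y) * c = (c⁻¹ * x * c) * (c⁻¹ * y * c) := by group
    rw [this]; exact N.mul_mem ihx ihy
  | inv x hx ihx =>
    have : c⁻¹ * x⁻¹ * c = (c⁻¹ * x * c)⁻¹ := by group
    rw [this]; exact N.inv_mem ihx

private lemma c_norm : c ∈ Subgroup.normalizer (N : Set (F2 × F2)) := by
  rw [Subgroup.mem_normalizer_iff]
  intro h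
  constructor
  · exact fun hh => conj_c h hh
  · intro hh
    have := conj_cinv _ hh
    have e : c⁻¹ * (c * h * c⁻¹) * c = h := by group
    rwa [e] at this

private lemma a_norm : a ∈ Subgroup.normalizer (N : Set (F2 × F2)) := by
  have : a = (c * a⁻¹)⁻¹ * c := by group
  rw [this]
  exact mul_mem (inv_mem (Subgroup.le_normalizer v_mem)) c_norm

private lemma b_norm : b ∈ Subgroup.normalizer (N : Set (F2 × F2)) := by
  have : b = (c * b⁻¹)⁻¹ * c := by group
  rw [this]
  exact mul_mem (inv_mem (Subgroup.le_normalizer p_mem)) c_norm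

private lemma d_norm : d ∈ Subgroup.normalizer (N : Set (F2 × F2)) := by
  have : d = (d * c⁻¹) * c := by group
  rw [this]
  exact mul_mem (Subgroup.le_normalizer r_mem) c_norm

private lemma gen_top : Subgroup.closure ({a, b, c, d} : Set (F2 × F2)) = ⊤ := by
  rw [eq_top_iff]
  rintro ⟨x, y⟩ -
  have hx : (x, (1 : F2)) ∈ Subgroup.closure ({a, b, c, d} : Set (F2 × F2)) := by
    induction x using FreeGroup.induction_on with
    | C1 => exact one_mem _
    | of i =>
      fin_cases i
      · exact Subgroup.subset_closure (show a ∈ ({a, b, c, d} : Set (F2 × F2)) by simp)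
      · exact Subgroup.subset_closure (show b ∈ ({a, b, c, d} : Set (F2 × F2)) by simp)
    | inv_of i ih =>
      have : ((FreeGroup.of i : F2)⁻¹, (1 : F2)) = ((FreeGroup.of i : F2), (1 : F2))⁻¹ := rfl
      rw [this]; exact inv_mem ih
    | mul u v hu hv =>
      have : (u * v, (1 : F2)) = (u, (1 : F2)) * (v, (1 : F2)) := by simp
      rw [this]; exact mul_mem hu hv
  have hy : ((1 : F2), y) ∈ Subgroup.closure ({a, b, c, d} : Set (F2 × F2)) := by
    induction y using FreeGroup.induction_on with
    | C1 => exact one_mem _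
    | of i =>
      fin_cases i
      · exact Subgroup.subset_closure (show c ∈ ({a, b, c, d} : Set (F2 × F2)) by simp)
      · exact Subgroup.subset_closure (show d ∈ ({a, b, c, d} : Set (F2 × F2)) by simp)
    | inv_of i ih =>
      have : ((1 : F2), (FreeGroup.of i : F2)⁻¹) = ((1 : F2), (FreeGroup.of i : F2))⁻¹ := rfl
      rw [this]; exact inv_mem ih
    | mul u v hu hv =>
      have : ((1 : F2), u * v) = ((1 : F2), u) * ((1 : F2), v) := by simp
      rw [this]; exact mul_mem hu hv
  have : (x, y) = (x, (1 : F2)) * ((1 : F2), y) := by simp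
  rw [this]; exact mul_mem hx hy

/-- The subgroup of `F = F(a,b) × F(c,d)` generated by the six elements
`ba⁻¹, ca⁻¹, da⁻¹, cb⁻¹, db⁻¹, dc⁻¹` is normal in `F`. -/
theorem stmt_0 :
    (Subgroup.closure
      ({b * a⁻¹, c * a⁻¹, d * a⁻¹, c * b⁻¹, d * b⁻¹, d * c⁻¹} : Set (F2 × F2))).Normal := by
  have : N.Normal := by
    rw [← Subgroup.normalizer_eq_top_iff, eq_top_iff, ← gen_top]
    rw [Subgroup.closure_le]
    rintro x (h | h | h | h) <;> subst h
    · exact a_norm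
    · exact b_norm
    · exact c_norm
    · exact d_norm
  exact this
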